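/- Let C be an abelian category. Dually to the injective case, every object (c,S,f) of C◁Set with c ≠ 0 is the codomain of a proper essential epimorphism from (c ⊕ c, S', f'); consequently C◁Set has no nonzero projective objects. -/

import Mathlib

open CategoryTheory Limits

universe v u

/-- An object of the set-decorated category `C ◁ Set`: a triple `(c, S, f)` with `c` an
object of `C`, `S` a set, and `f : S → End c`, encoded as a function `ZFSet → End c`
vanishing outside `S` (the paper's convention that `f` evaluates to `0` outside `S`). -/
structure DecObj (C : Type u) [Category.{v} C] [Preadditive C] : Type (max u v 2) where
  c : C
  S : ZFSet.{0}
  f : ZFSet.{0} → (c ⟶ c)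
  hf : ∀ s : ZFSet.{0}, s ∉ S → f s = 0

namespace DecObj

variable {C : Type u} [Category.{v} C] [Preadditive C]

/-- `ψ : c ⟶ c'` intertwines the decorations of `X` and `Y`; by the vanishing-outside-`S`
convention this is exactly the three-case condition of the paper. -/
def Intertwines (X Y : DecObj C) (ψ : X.c ⟶ Y.c) : Prop :=
  ∀ s : ZFSet.{0}, X.f s ≫ ψ = ψ ≫ Y.f s

/-- Morphisms in `C ◁ Set`. -/
@[ext]
structure Hom (X Y : DecObj C) where
  ψ : X.c ⟶ Y.c
  comm : Intertwines X Y ψ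

instance : Category (DecObj C) where
  Hom := Hom
  id X := ⟨𝟙 X.c, fun s => by simp [Intertwines]⟩
  comp g h := ⟨g.ψ ≫ h.ψ, fun s => by
    rw [← Category.assoc, g.comm s, Category.assoc, h.comm s, Category.assoc]⟩

@[simp] theorem id_ψ (X : DecObj C) : Hom.ψ (𝟙 X) = 𝟙 X.c := rfl

@[simp] theorem comp_ψ {X Y Z : DecObj C} (g : X ⟶ Y) (h : Y ⟶ Z) :
    (g ≫ h).ψ = g.ψ ≫ h.ψ := rfl

/-- The forgetful functor `U : C ◁ Set ⥤ C`. -/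
def forgetDec (C : Type u) [Category.{v} C] [Preadditive C] : DecObj C ⥤ C where
  obj X := X.c
  map g := g.ψ

end DecObj



section Aux

open DecObj

variable {C : Type u} [Category.{v} C] [Preadditive C]

theorem DecObj.epi_of_psi_epi {X Y : DecObj C} (g : X ⟶ Y) (h : Epi g.ψ) : Epi g := by
  constructor
  intro W a b hab
  apply DecObj.Hom.ext
  have : g.ψ ≫ a.ψ = g.ψ ≫ b.ψ := by
    have := congrArg DecObj.Hom.ψ hab
    simpa using this
  exact (cancel_epi g.ψ).mp this

theorem DecObj.psi_epi_of_epi {C : Type u} [Category.{v} C] [Abelian C]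
    {X Y : DecObj C} (g : X ⟶ Y) (h : Epi g) : Epi g.ψ := by
  let Q := cokernel g.ψ
  have hW : ∀ s : ZFSet.{0}, g.ψ ≫ (Y.f s ≫ cokernel.π g.ψ) = 0 := by
    intro s
    rw [← Category.assoc, ← g.comm s, Category.assoc, cokernel.condition, comp_zero]
  let W : DecObj C :=
    { c := Q
      S := Y.S
      f := fun s => cokernel.desc g.ψ (Y.f s ≫ cokernel.π g.ψ) (hW s)
      hf := by
        intro s hs
        apply coequalizer.hom_ext
        simp [Y.hf s hs] }
  let q : Y ⟶ W := ⟨cokernel.π g.ψ, fun s => by simp [W]⟩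
  let q0 : Y ⟶ W := ⟨0, fun s => by simp [Intertwines]⟩
  have hq : g ≫ q = g ≫ q0 := by
    apply DecObj.Hom.ext
    simp only [comp_ψ]
    simp [q, q0, cokernel.condition]
  have : q = q0 := (cancel_epi g).mp hq
  have hπ : cokernel.π g.ψ = 0 := congrArg DecObj.Hom.ψ this
  exact Abelian.epi_of_cokernel_π_eq_zero _ hπ

end Aux


attribute [local instance] Classical.propDecidable

theorem aux_exists_essential (C : Type u) [Category.{v} C] [Abelian C] :
    ∀ X : DecObj C, ¬ IsZero X.c →
      ∃ (S' : ZFSet.{0}) (f' : ZFSet.{0} → (X.c ⊞ X.c ⟶ X.c ⊞ X.c))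
        (hf' : ∀ s ∉ S', f' s = 0)
        (e : (DecObj.mk (X.c ⊞ X.c) S' f' hf') ⟶ X),
        Epi e ∧ ¬ IsIso e ∧
        (∀ (Z : DecObj C) (u : Z ⟶ DecObj.mk (X.c ⊞ X.c) S' f' hf'),
          Mono u → Epi (u ≫ e) → Epi u) := by
  intro X hX
  set s0 : ZFSet.{0} := X.S with hs0
  have hs0mem : s0 ∉ X.S := ZFSet.mem_irrefl X.S
  refine ⟨insert s0 X.S,
    fun s => if s = s0 then biprod.fst ≫ biprod.inr else biprod.map (X.f s) (X.f s),
    ?_, ?_⟩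
  · intro s hs
    rw [ZFSet.mem_insert_iff] at hs
    push_neg at hs
    dsimp only
    rw [if_neg hs.1, X.hf s hs.2]
    ext <;> simp
  · refine ⟨⟨biprod.fst, ?_⟩, ?_, ?_, ?_⟩
    · intro s
      dsimp only
      by_cases h : s = s0
      · subst h
        rw [if_pos rfl, X.hf s0 hs0mem, comp_zero, Category.assoc, biprod.inr_fst,
          comp_zero]
      · rw [if_neg h, biprod.map_fst]
    · exact DecObj.epi_of_psi_epi _ inferInstance
    · -- not an isomorphism
      intro (hiso : IsIso (_ : DecObj.mk (X.c ⊞ X.c) _ _ _ ⟶ X))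
      generalize_proofs hp1 hp2 hp3 at hiso
      set e : DecObj.mk (X.c ⊞ X.c) _ _ hp2 ⟶ X := ⟨biprod.fst, hp3⟩
      have hieq : (inv e).ψ ≫ biprod.fst = 𝟙 X.c := by
        have h2 := congrArg DecObj.Hom.ψ (IsIso.inv_hom_id e)
        rw [DecObj.comp_ψ, DecObj.id_ψ] at h2
        exact h2
      have hcomm := (inv e).comm s0
      dsimp only at hcomm
      rw [X.hf s0 hs0mem, zero_comp, if_pos rfl, ← Category.assoc, hieq,
        Category.id_comp] at hcomm
      apply hX
      rw [IsZero.iff_id_eq_zero]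
      calc 𝟙 X.c = biprod.inr ≫ biprod.snd := by simp
        _ = 0 := by rw [← hcomm, zero_comp]
    · -- essentiality
      intro Z u _ hue
      apply DecObj.epi_of_psi_epi
      have hp : Epi (u.ψ ≫ biprod.fst) := by
        have := DecObj.psi_epi_of_epi _ hue
        simpa using this
      have ht : Z.f s0 ≫ u.ψ = u.ψ ≫ (biprod.fst ≫ biprod.inr) := by
        have := u.comm s0
        dsimp only at this
        rwa [if_pos rfl] at this
      rw [Preadditive.epi_iff_cancel_zero]
      intro d k hk
      have hk2 : (u.ψ ≫ biprod.fst) ≫ (biprod.inr ≫ k) = 0 := by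
        rw [Category.assoc, ← Category.assoc biprod.fst, ← Category.assoc,
          ← ht, Category.assoc, hk, comp_zero]
      have hk2' : biprod.inr ≫ k = 0 :=
        (Preadditive.epi_iff_cancel_zero _).mp hp _ _ hk2
      have hk1 : (u.ψ ≫ biprod.fst) ≫ (biprod.inl ≫ k) = 0 := by
        have htot : u.ψ ≫ k =
            (u.ψ ≫ biprod.fst) ≫ (biprod.inl ≫ k)
              + (u.ψ ≫ biprod.snd) ≫ (biprod.inr ≫ k) := by
          conv_lhs => rw [← Category.id_comp k, ← biprod.total]
          simp only [Preadditive.add_comp, Preadditive.comp_add, Category.assoc]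
        rw [hk, hk2'] at htot
        simpa using htot.symm
      have hk1' : biprod.inl ≫ k = 0 :=
        (Preadditive.epi_iff_cancel_zero _).mp hp _ _ hk1
      apply biprod.hom_ext' <;> simp [hk1', hk2']

/-- in `C ◁ Set` over an abelian `C`, every object `(c,S,f)` with `c ≠ 0`
is the codomain of a proper essential epimorphism from an object of the form
`(c ⊞ c, S', f')`; consequently `C ◁ Set` has no nonzero projective objects. -/
theorem no_nonzero_projectives (C : Type u) [Category.{v} C] [Abelian C] :
    (∀ X : DecObj C, ¬ IsZero X.c →
      ∃ (S' : ZFSet.{0}) (f' : ZFSet.{0} → (X.c ⊞ X.c ⟶ X.c ⊞ X.c))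
        (hf' : ∀ s ∉ S', f' s = 0)
        (e : (DecObj.mk (X.c ⊞ X.c) S' f' hf') ⟶ X),
        Epi e ∧ ¬ IsIso e ∧
        -- `e` is essential: no proper subobject of the domain maps onto `X` via `e`
        (∀ (Z : DecObj C) (u : Z ⟶ DecObj.mk (X.c ⊞ X.c) S' f' hf'),
          Mono u → Epi (u ≫ e) → Epi u)) ∧
    (∀ X : DecObj C, Projective X → IsZero X.c) := by
  
  refine ⟨aux_exists_essential C, ?_⟩
  intro X hproj
  by_contra hX
  obtain ⟨S', f', hf', e, hepi, hniso, hess⟩ := aux_exists_essential C X hX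
  obtain ⟨m, hm⟩ := Projective.factors (𝟙 X) e
  have hmono : Mono m := mono_of_mono_fac hm
  have hme : Epi (m ≫ e) := by rw [hm]; infer_instance
  have hmepi : Epi m := hess X m hmono hme
  have hem : e ≫ m = 𝟙 _ := by
    have : m ≫ e ≫ m = m ≫ 𝟙 _ := by
      rw [← Category.assoc, hm, Category.id_comp, Category.comp_id]
    exact (cancel_epi m).mp this
  exact hniso ⟨m, hem, hm⟩
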